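/- Let f = Σ_{n=0}^∞ C_n·X^n/n! ∈ ℝ⟦X⟧ be the exponential generating function of the eigensequence of the Stirling transform. Then the second derivative of f satisfies, in ℝ⟦X⟧: f'' = exp(X)·(f ∘ σ^2 + 1), where σ^2 = σ^1 ∘ σ^1 with σ^1 = exp(X) − 1 (composition is well-defined since σ^1 has zero constant term). -/

import Mathlib

/-- Stirling numbers of the second kind. -/
def S2 : ℕ → ℕ → ℕ
  | 0, 0 => 1
  | 0, _ + 1 => 0
  | _ + 1, 0 => 0
  | n + 1, m + 1 => (m + 1) * S2 n (m + 1) + S2 n m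

/-- Entries `S^p_{n,m}` of the `p`-th power of the Stirling matrix (for `p ≥ 1`;
the value at `p = 0` is junk). -/
def Sp : ℕ → ℕ → ℕ → ℕ
  | 0, _, _ => 0
  | 1, n, m => S2 n m
  | p + 2, n, m => ∑ k ∈ Finset.range (n + 1), S2 n k * Sp (p + 1) k m

/-- Composition `f ∘ g` of formal power series (the intended meaning when `g` has zero
constant term, in which case `coeff n (g ^ k) = 0` for `k > n`). -/
noncomputable def PSComp (f g : PowerSeries ℝ) : PowerSeries ℝ :=
  PowerSeries.mk fun n =>
    ∑ k ∈ Finset.range (n + 1), (PowerSeries.coeff k f) * (PowerSeries.coeff n (g ^ k))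

/-- `σ^p`, the `p`-fold compositional iterate of `exp X - 1` (with `σ^0 = X`). -/
noncomputable def sigmaP : ℕ → PowerSeries ℝ
  | 0 => PowerSeries.X
  | p + 1 => PSComp (sigmaP p) (PowerSeries.exp ℝ - 1)
open PowerSeries Finset


lemma coeff_pow_zero {g : PowerSeries ℝ} (hg : constantCoeff g = 0)
    {n k : ℕ} (h : n < k) : coeff n (g ^ k) = 0 := by
  have hd : (X : PowerSeries ℝ) ^ k ∣ g ^ k :=
    pow_dvd_pow_of_dvd (X_dvd_iff.mpr hg) k
  exact X_pow_dvd_iff.mp hd n h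

lemma coeff_PSComp (f g : PowerSeries ℝ) (n : ℕ) :
    coeff n (PSComp f g) =
      ∑ k ∈ range (n + 1), coeff k f * coeff n (g ^ k) := by
  simp [PSComp]

lemma coeff_PSComp_ext {g : PowerSeries ℝ} (hg : constantCoeff g = 0)
    (f : PowerSeries ℝ) {n N : ℕ} (hN : n + 1 ≤ N) :
    coeff n (PSComp f g) = ∑ k ∈ range N, coeff k f * coeff n (g ^ k) := by
  rw [coeff_PSComp]
  apply Finset.sum_subset (Finset.range_subset_range.mpr hN)
  intro k _ hk
  rw [mem_range, not_lt] at hk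
  rw [coeff_pow_zero hg (by omega), mul_zero]

lemma triangle_to_square (n : ℕ) (F : ℕ → ℕ → ℝ)
    (hF : ∀ i j, n < i + j → F i j = 0) :
    ∑ k ∈ range (n + 1), ∑ p ∈ antidiagonal k, F p.1 p.2
      = ∑ i ∈ range (n + 1), ∑ j ∈ range (n + 1), F i j := by
  rw [← Finset.sum_product']
  rw [← Finset.sum_biUnion (by
    intro a _ b _ hab
    simp only [Function.onFun, Finset.disjoint_left]
    intro p hp hq
    rw [Finset.HasAntidiagonal.mem_antidiagonal] at hp hq
    exact hab (by omega))]
  apply Finset.sum_subset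
  · intro p hp
    simp only [Finset.mem_biUnion, mem_range] at hp
    obtain ⟨k, hk, hpk⟩ := hp
    rw [Finset.HasAntidiagonal.mem_antidiagonal] at hpk
    simp only [mem_product, mem_range]
    omega
  · intro p _ hnp
    apply hF
    by_contra h
    push_neg at h
    exact hnp (Finset.mem_biUnion.mpr
      ⟨p.1 + p.2, mem_range.mpr (by omega), Finset.HasAntidiagonal.mem_antidiagonal.mpr rfl⟩)

lemma PSComp_one (g : PowerSeries ℝ) : PSComp 1 g = 1 := by
  ext n
  rw [coeff_PSComp]
  rw [Finset.sum_eq_single 0]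
  · simp
  · intro k _ hk
    simp [coeff_one, hk]
  · simp

lemma PSComp_add (a b g : PowerSeries ℝ) :
    PSComp (a + b) g = PSComp a g + PSComp b g := by
  ext n
  simp [coeff_PSComp, add_mul, Finset.sum_add_distrib]

lemma PSComp_mul {g : PowerSeries ℝ} (hg : constantCoeff g = 0) (a b : PowerSeries ℝ) :
    PSComp (a * b) g = PSComp a g * PSComp b g := by
  ext n
  rw [coeff_PSComp, coeff_mul]
  have hR : ∑ p ∈ antidiagonal n, coeff p.1 (PSComp a g) * coeff p.2 (PSComp b g)
      = ∑ i ∈ range (n + 1), ∑ j ∈ range (n + 1),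
          coeff i a * coeff j b * coeff n (g ^ (i + j)) := by
    have step : ∀ p ∈ antidiagonal n,
        coeff p.1 (PSComp a g) * coeff p.2 (PSComp b g)
          = ∑ i ∈ range (n + 1), ∑ j ∈ range (n + 1),
              (coeff i a * coeff p.1 (g ^ i)) * (coeff j b * coeff p.2 (g ^ j)) := by
      intro p hp
      rw [Finset.HasAntidiagonal.mem_antidiagonal] at hp
      rw [coeff_PSComp_ext hg a (n := p.1) (N := n + 1) (by omega),
          coeff_PSComp_ext hg b (n := p.2) (N := n + 1) (by omega), Finset.sum_mul_sum]
    rw [Finset.sum_congr rfl step, Finset.sum_comm]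
    apply Finset.sum_congr rfl
    intro i _
    rw [Finset.sum_comm]
    apply Finset.sum_congr rfl
    intro j _
    rw [pow_add, coeff_mul, Finset.mul_sum]
    exact Finset.sum_congr rfl fun x _ => by ring
  rw [hR]
  have hL : ∀ k ∈ range (n + 1),
      coeff k (a * b) * coeff n (g ^ k)
        = ∑ p ∈ antidiagonal k, coeff p.1 a * coeff p.2 b * coeff n (g ^ (p.1 + p.2)) := by
    intro k hk
    rw [coeff_mul, Finset.sum_mul]
    apply Finset.sum_congr rfl
    intro p hp
    rw [Finset.HasAntidiagonal.mem_antidiagonal] at hp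
    rw [hp]
  rw [Finset.sum_congr rfl hL]
  exact triangle_to_square n (fun i j => coeff i a * coeff j b * coeff n (g ^ (i + j)))
    (fun i j h => by rw [coeff_pow_zero hg h, mul_zero])

lemma PSComp_pow {g : PowerSeries ℝ} (hg : constantCoeff g = 0) (a : PowerSeries ℝ) (m : ℕ) :
    PSComp (a ^ m) g = (PSComp a g) ^ m := by
  induction m with
  | zero => simpa using PSComp_one g
  | succ m ih => rw [pow_succ, pow_succ, PSComp_mul hg, ih]

lemma PSComp_X {g : PowerSeries ℝ} (hg : constantCoeff g = 0) :
    PSComp X g = g := by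
  ext n
  rw [coeff_PSComp]
  rw [Finset.sum_eq_single 1]
  · simp
  · intro k _ hk
    simp [coeff_X, hk]
  · intro h
    simp only [mem_range, not_lt] at h
    have hn0 : n = 0 := by omega
    subst hn0
    simp [coeff_zero_eq_constantCoeff, hg]

lemma constantCoeff_PSComp {g : PowerSeries ℝ} (hg : constantCoeff g = 0)
    (f : PowerSeries ℝ) (hf : constantCoeff f = 0) :
    constantCoeff (PSComp f g) = 0 := by
  rw [← coeff_zero_eq_constantCoeff_apply, coeff_PSComp]
  simp [coeff_zero_eq_constantCoeff, hf]

lemma PSComp_assoc (f : PowerSeries ℝ) {a b : PowerSeries ℝ} (ha : constantCoeff a = 0)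
    (hb : constantCoeff b = 0) :
    PSComp (PSComp f a) b = PSComp f (PSComp a b) := by
  have hab : constantCoeff (PSComp a b) = 0 := constantCoeff_PSComp hb a ha
  ext n
  rw [coeff_PSComp, coeff_PSComp]
  have hL : ∀ k ∈ range (n + 1),
      coeff k (PSComp f a) * coeff n (b ^ k)
        = ∑ m ∈ range (n + 1), coeff m f * coeff k (a ^ m) * coeff n (b ^ k) := by
    intro k hk
    rw [mem_range] at hk
    rw [coeff_PSComp_ext ha f (n := k) (N := n + 1) (by omega), Finset.sum_mul]
  rw [Finset.sum_congr rfl hL, Finset.sum_comm]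
  apply Finset.sum_congr rfl
  intro m _
  rw [← PSComp_pow hb a m, coeff_PSComp, Finset.mul_sum]
  exact Finset.sum_congr rfl fun k _ => by ring

lemma derivative_exp' : derivative ℝ (exp ℝ) = exp ℝ := by
  ext n
  rw [coeff_derivative, coeff_exp, coeff_exp]
  have h1 : ((n + 1).factorial : ℝ) = (n.factorial : ℝ) * (n + 1) := by
    rw [Nat.factorial_succ]; push_cast; ring
  have h2 : ((n : ℝ) + 1) ≠ 0 := by positivity
  have h3 : ((n.factorial : ℝ)) ≠ 0 := Nat.cast_ne_zero.mpr n.factorial_ne_zero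
  simp only [map_div₀, map_one, map_natCast, eq_ratCast]
  push_cast [h1]
  field_simp

lemma constantCoeff_em1 : constantCoeff (exp ℝ - 1) = 0 := by
  rw [map_sub, constantCoeff_exp, map_one, sub_self]

lemma derivative_em1 : derivative ℝ (exp ℝ - 1) = exp ℝ := by
  rw [map_sub, derivative_exp', Derivation.map_one_eq_zero, sub_zero]

lemma derivative_PSComp (h : PowerSeries ℝ) {g : PowerSeries ℝ}
    (hg : constantCoeff g = 0) :
    derivative ℝ (PSComp h g) = PSComp (derivative ℝ h) g * derivative ℝ g := by
  ext n
  rw [coeff_derivative, coeff_PSComp, Finset.sum_mul]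
  have hL : ∀ k ∈ range (n + 2),
      coeff k h * coeff (n + 1) (g ^ k) * (n + 1)
        = coeff k h * coeff n (derivative ℝ (g ^ k)) := by
    intro k _
    rw [coeff_derivative, mul_assoc]
  rw [Finset.sum_congr rfl hL, Finset.sum_range_succ']
  have hzero : coeff 0 h * coeff n (derivative ℝ ((g : PowerSeries ℝ) ^ 0)) = 0 := by
    simp
  rw [hzero, add_zero]
  have hterm : ∀ j ∈ range (n + 1),
      coeff (j + 1) h * coeff n (derivative ℝ (g ^ (j + 1)))
        = ∑ p ∈ antidiagonal n,
            ((j : ℝ) + 1) * coeff (j + 1) h * (coeff p.1 (g ^ j) * coeff p.2 (derivative ℝ g)) := by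
    intro j _
    have hd : derivative ℝ (g ^ (j + 1)) = (j + 1) • (g ^ j * derivative ℝ g) := by
      rw [Derivation.leibniz_pow]
      simp only [Nat.add_sub_cancel, smul_eq_mul, smul_smul]
    rw [hd, map_nsmul, nsmul_eq_mul, coeff_mul, Finset.mul_sum, Finset.mul_sum]
    apply Finset.sum_congr rfl
    intro p _
    push_cast
    ring
  rw [Finset.sum_congr rfl hterm]
  -- RHS
  rw [coeff_mul]
  have hR : ∀ p ∈ antidiagonal n,
      coeff p.1 (PSComp (derivative ℝ h) g) * coeff p.2 (derivative ℝ g)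
        = ∑ j ∈ range (n + 1),
            ((j : ℝ) + 1) * coeff (j + 1) h * (coeff p.1 (g ^ j) * coeff p.2 (derivative ℝ g)) := by
    intro p hp
    rw [Finset.HasAntidiagonal.mem_antidiagonal] at hp
    rw [coeff_PSComp_ext hg (derivative ℝ h) (n := p.1) (N := n + 1) (by omega), Finset.sum_mul]
    apply Finset.sum_congr rfl
    intro j _
    rw [coeff_derivative]
    ring
  rw [Finset.sum_congr rfl hR, Finset.sum_comm]


lemma factorial_coeff_em1_pow : ∀ n k : ℕ,
    (n.factorial : ℝ) * coeff n ((exp ℝ - 1) ^ k) = (k.factorial : ℝ) * S2 n k := by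
  intro n
  induction n with
  | zero =>
    intro k
    cases k with
    | zero => simp [S2]
    | succ k =>
      rw [coeff_zero_eq_constantCoeff_apply, map_pow, constantCoeff_em1]
      simp [S2]
  | succ n ih =>
    intro k
    cases k with
    | zero =>
      simp only [pow_zero, coeff_one, S2]
      simp
    | succ j =>
      have hd : derivative ℝ ((exp ℝ - 1) ^ (j + 1))
          = (j + 1) • ((exp ℝ - 1) ^ (j + 1) + (exp ℝ - 1) ^ j) := by
        rw [Derivation.leibniz_pow, derivative_em1]
        simp only [Nat.add_sub_cancel, smul_eq_mul, smul_smul]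
        have h : (exp ℝ : PowerSeries ℝ) = (exp ℝ - 1) + 1 := by ring
        rw [h]
        congr 1
        ring
      have hc := congrArg (coeff n) hd
      rw [coeff_derivative, map_nsmul, nsmul_eq_mul, map_add] at hc
      have key : ((n + 1).factorial : ℝ) * coeff (n + 1) ((exp ℝ - 1) ^ (j + 1))
          = (n.factorial : ℝ) * (coeff (n + 1) ((exp ℝ - 1) ^ (j + 1)) * (n + 1)) := by
        rw [Nat.factorial_succ]; push_cast; ring
      rw [key, hc, mul_add, mul_add]
      have e1 := ih (j + 1)
      have e2 := ih j
      have hS : (S2 (n + 1) (j + 1) : ℝ) = (j + 1) * S2 n (j + 1) + S2 n j := by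
        show ((S2 (n+1) (j+1) : ℕ) : ℝ) = _
        rw [show S2 (n+1) (j+1) = (j + 1) * S2 n (j+1) + S2 n j from rfl]
        push_cast; ring
      have hf : ((j + 1).factorial : ℝ) = (j + 1) * j.factorial := by
        rw [Nat.factorial_succ]; push_cast; ring
      push_cast
      rw [show (n.factorial : ℝ) * (((j : ℝ) + 1) * coeff n ((exp ℝ - 1) ^ (j + 1)))
          = ((j : ℝ) + 1) * ((n.factorial : ℝ) * coeff n ((exp ℝ - 1) ^ (j + 1))) from by ring,
        show (n.factorial : ℝ) * (((j : ℝ) + 1) * coeff n ((exp ℝ - 1) ^ j))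
          = ((j : ℝ) + 1) * ((n.factorial : ℝ) * coeff n ((exp ℝ - 1) ^ j)) from by ring,
        e1, e2, hS, hf]
      push_cast
      ring

lemma coeff_em1_pow (n k : ℕ) :
    coeff n ((exp ℝ - 1) ^ k) = (k.factorial : ℝ) * S2 n k / n.factorial := by
  have h := factorial_coeff_em1_pow n k
  have hne : (n.factorial : ℝ) ≠ 0 := Nat.cast_ne_zero.mpr n.factorial_ne_zero
  rw [eq_div_iff hne]
  linarith [h]

lemma step1 (c : ℕ → ℝ) (h0 : c 0 = 0) (h1 : c 1 = 1)
    (hrec : ∀ n, 1 ≤ n → c (n + 1) = ∑ k ∈ Finset.range (n + 1), c k * S2 n k) :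
    derivative ℝ (mk fun n => c n / n.factorial)
      = PSComp (mk fun n => c n / n.factorial) (exp ℝ - 1) + 1 := by
  ext n
  rw [coeff_derivative, map_add, coeff_PSComp]
  simp only [coeff_mk, coeff_one]
  have hterm : ∀ k ∈ range (n + 1),
      c k / k.factorial * coeff n ((exp ℝ - 1) ^ k)
        = c k * S2 n k / n.factorial := by
    intro k _
    rw [coeff_em1_pow]
    have hk : (k.factorial : ℝ) ≠ 0 := Nat.cast_ne_zero.mpr k.factorial_ne_zero
    field_simp
  rw [Finset.sum_congr rfl hterm, ← Finset.sum_div]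
  have hfact : ((n + 1).factorial : ℝ) = (n.factorial : ℝ) * (n + 1) := by
    rw [Nat.factorial_succ]; push_cast; ring
  have hne : (n.factorial : ℝ) ≠ 0 := Nat.cast_ne_zero.mpr n.factorial_ne_zero
  have hne1 : ((n : ℝ) + 1) ≠ 0 := by positivity
  rcases Nat.eq_zero_or_pos n with hn | hn
  · subst hn
    simp [h0, h1]
  · have hrn := hrec n hn
    rw [if_neg (by omega), add_zero, ← hrn, hfact]
    field_simp



/-- If `c` is the eigensequence of the Stirling transform (`c 0 = 0`, `c 1 = 1`,
`c (n+1) = ∑_{k=0}^n c k · S(n,k)` for `n ≥ 1`), then its EGF `f` satisfies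
`f'' = exp(X) · (f ∘ σ² + 1)`. -/
theorem eigensequence_egf_second_derivative (c : ℕ → ℝ) (h0 : c 0 = 0) (h1 : c 1 = 1)
    (hrec : ∀ n, 1 ≤ n → c (n + 1) = ∑ k ∈ Finset.range (n + 1), c k * S2 n k) :
    PowerSeries.derivative ℝ
        (PowerSeries.derivative ℝ (PowerSeries.mk fun n => c n / n.factorial)) =
      PowerSeries.exp ℝ *
        (PSComp (PowerSeries.mk fun n => c n / n.factorial) (sigmaP 2) + 1) := by
  have hg := constantCoeff_em1
  have hstep := step1 c h0 h1 hrec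
  have hσ : sigmaP 2 = PSComp (exp ℝ - 1) (exp ℝ - 1) := by
    show PSComp (PSComp X (exp ℝ - 1)) (exp ℝ - 1) = _
    rw [PSComp_X hg]
  rw [hσ]
  set F : PowerSeries ℝ := mk fun n => c n / n.factorial with hF
  calc derivative ℝ (derivative ℝ F)
      = derivative ℝ (PSComp F (exp ℝ - 1) + 1) := by rw [hstep]
    _ = derivative ℝ (PSComp F (exp ℝ - 1)) := by
          rw [map_add, Derivation.map_one_eq_zero, add_zero]
    _ = PSComp (derivative ℝ F) (exp ℝ - 1) * derivative ℝ (exp ℝ - 1) :=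
          derivative_PSComp F hg
    _ = PSComp (PSComp F (exp ℝ - 1) + 1) (exp ℝ - 1) * exp ℝ := by
          rw [hstep, derivative_em1]
    _ = (PSComp (PSComp F (exp ℝ - 1)) (exp ℝ - 1) + 1) * exp ℝ := by
          rw [PSComp_add, PSComp_one]
    _ = exp ℝ * (PSComp F (PSComp (exp ℝ - 1) (exp ℝ - 1)) + 1) := by
          rw [PSComp_assoc F hg hg]; ring
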